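/- Let 0 < d, 2d ≤ s, and let X, Y be independent random variables each uniformly distributed on [0,s]. For any r with 0 < r < d/s, the diversified position ν = (1−r)X + rY satisfies P(ν < d) = (2d − r·s)/(2s(1−r)). -/

import Mathlib

open MeasureTheory ProbabilityTheory Set

/-- The uniform probability distribution on the interval `[0, s]`. -/
noncomputable def uniformOnIcc (s : ℝ) : Measure ℝ :=
  (ENNReal.ofReal s)⁻¹ • (volume.restrict (Icc (0 : ℝ) s))

/-- for `0 < r < d/s`, the diversified position `ν = (1-r)X + rY`
satisfies `P(ν < d) = (2d - r s)/(2 s (1 - r))`. -/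
theorem prob_individual_default_small_r
    {Ω : Type*} [MeasurableSpace Ω] (P : Measure Ω) [IsProbabilityMeasure P]
    (s d : ℝ) (hd : 0 < d) (hs : 2 * d ≤ s)
    (X Y : Ω → ℝ) (hXm : Measurable X) (hYm : Measurable Y)
    (hX : P.map X = uniformOnIcc s) (hY : P.map Y = uniformOnIcc s)
    (hXY : IndepFun X Y P)
    (r : ℝ) (hr0 : 0 < r) (hr1 : r < d / s) :
    P {ω | (1 - r) * X ω + r * Y ω < d}
      = ENNReal.ofReal ((2 * d - r * s) / (2 * s * (1 - r))) := by
  have hs0 : 0 < s := by linarith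
  have hrs : r * s < d := (lt_div_iff₀ hs0).mp hr1
  have hrhalf : r < 1/2 := by nlinarith
  have h1r : 0 < 1 - r := by linarith
  set μ := uniformOnIcc s with hμdef
  have hSm : MeasurableSet {p : ℝ × ℝ | (1-r) * p.2 + r * p.1 < d} := by
    apply measurableSet_lt (by fun_prop) measurable_const
  have hmap : P.map (fun ω => (Y ω, X ω)) = μ.prod μ := by
    rw [(indepFun_iff_map_prod_eq_prod_map_map hYm.aemeasurable hXm.aemeasurable).mp hXY.symm,
      hY, hX]
  have hset : {ω | (1 - r) * X ω + r * Y ω < d}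
      = (fun ω => (Y ω, X ω)) ⁻¹' {p : ℝ × ℝ | (1-r) * p.2 + r * p.1 < d} := rfl
  have hSF : SFinite μ := by
    rw [hμdef, uniformOnIcc]; infer_instance
  rw [hset, ← Measure.map_apply (hYm.prodMk hXm) hSm, hmap, Measure.prod_apply hSm]
  -- inner value on Icc 0 s
  have hinner : ∀ y ∈ Icc (0:ℝ) s,
      ((ENNReal.ofReal s)⁻¹ • (volume.restrict (Icc (0:ℝ) s))) (Prod.mk y ⁻¹' {p : ℝ × ℝ | (1-r) * p.2 + r * p.1 < d})
        = (ENNReal.ofReal s)⁻¹ * ENNReal.ofReal ((d - r * y)/(1-r)) := by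
    intro y hy
    have ht0 : 0 ≤ (d - r * y)/(1-r) := by
      apply div_nonneg _ h1r.le
      nlinarith [hy.1, hy.2]
    have hts : (d - r * y)/(1-r) ≤ s := by
      rw [div_le_iff₀ h1r]
      nlinarith [hy.1, hy.2]
    have hpre : Prod.mk y ⁻¹' {p : ℝ × ℝ | (1-r) * p.2 + r * p.1 < d}
        = Iio ((d - r * y)/(1-r)) := by
      ext x
      simp only [mem_preimage, mem_setOf_eq, mem_Iio]
      rw [lt_div_iff₀ h1r]
      constructor <;> intro h <;> nlinarith
    rw [hpre]
    simp only [Measure.smul_apply, smul_eq_mul]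
    rw [Measure.restrict_apply measurableSet_Iio]
    have : Iio ((d - r * y)/(1-r)) ∩ Icc 0 s = Ico 0 ((d - r * y)/(1-r)) := by
      ext x
      simp only [mem_inter_iff, mem_Iio, mem_Icc, mem_Ico]
      constructor
      · rintro ⟨h1, h2, h3⟩; exact ⟨h2, h1⟩
      · rintro ⟨h1, h2⟩; exact ⟨h2, h1, le_trans h2.le hts⟩
    rw [this, Real.volume_Ico]
    ring_nf
  rw [hμdef, uniformOnIcc, lintegral_smul_measure,
    setLIntegral_congr_fun measurableSet_Icc hinner,
    lintegral_const_mul _ (by fun_prop)]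
  have hint : ∫ y in Icc (0:ℝ) s, (d - r * y)/(1-r) = (d*s - r*s^2/2)/(1-r) := by
    rw [integral_Icc_eq_integral_Ioc, ← intervalIntegral.integral_of_le hs0.le]
    rw [intervalIntegral.integral_div]
    congr 1
    have h1 : IntervalIntegrable (fun x : ℝ => r * x) volume 0 s := by
      apply Continuous.intervalIntegrable; fun_prop
    have key := intervalIntegral.integral_sub (μ := volume) (a := 0) (b := s)
      (f := fun _ : ℝ => d) (g := fun x : ℝ => r * x) intervalIntegrable_const h1
    rw [key, intervalIntegral.integral_const_mul, integral_id]
    simp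
    ring
  have hA0 : 0 ≤ (d*s - r*s^2/2)/(1-r) := by
    apply div_nonneg _ h1r.le
    nlinarith
  rw [← hint] at hA0
  rw [← ofReal_integral_eq_lintegral_ofReal
      (by apply Continuous.integrableOn_Icc; fun_prop) (ae_restrict_of_forall_mem measurableSet_Icc (by
        intro y hy
        apply div_nonneg _ h1r.le
        nlinarith [hy.1, hy.2])), hint]
  rw [hint] at hA0
  rw [← ENNReal.ofReal_inv_of_pos hs0, ← ENNReal.ofReal_mul (by positivity),
    smul_eq_mul, ← ENNReal.ofReal_mul (by positivity)]
  congr 1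
  field_simp
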